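/- Let Ψ⁰, Ψ¹ be n×n nonnegative matrices with row sums < 1, and S ⊆ {1,…,n}. Let B^S = (I − Ψ^S)ᵀ and N^S = (I − Ψ^{S^c,swap})ᵀ, where Ψ^S uses action 1 rows on S and action 0 rows on S^c, and Ψ^{S^c,swap} uses action 0 rows on S and action 1 rows on S^c. Set H^S = (B^S)⁻¹ and A^S = H^S N^S. Then the row vector of marginal rewards satisfies (f_S^S, −f_{S^c}^S) = (r_S^1, r_{S^c}^0)·A^S − (r_S^0, r_{S^c}^1), where f^S is defined componentwise as f_i^S = (r_i^1 + (Ψ¹F^S)_i) − (r_i^0 + (Ψ⁰F^S)_i) and F^S = (I − Ψ^S)⁻¹ r^S (column conventions adapted). -/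
import Mathlib


open Matrix

/-- Lemma 1(e) of the paper, componentwise: with `B^S = (I − Ψ^S)ᵀ`,
`N^S = (I − Ψ^{S,swap})ᵀ`, `H^S = (B^S)⁻¹`, `A^S = H^S N^S`, and marginal
rewards `f_i^S = (r_i¹ + (Ψ¹F^S)_i) − (r_i⁰ + (Ψ⁰F^S)_i)` where
`F^S = (I − Ψ^S)⁻¹ *ᵥ r^S`, the block row vector `(f_S^S, −f_{S^c}^S)`
equals `(r_S¹, r_{S^c}⁰) ᵥ* A^S − (r_S⁰, r_{S^c}¹)`. -/
theorem stmt4 {n : ℕ} (Ψ0 Ψ1 : Matrix (Fin n) (Fin n) ℝ)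
    (h0nn : ∀ i j, 0 ≤ Ψ0 i j) (h1nn : ∀ i j, 0 ≤ Ψ1 i j)
    (h0rs : ∀ i, ∑ j, Ψ0 i j < 1) (h1rs : ∀ i, ∑ j, Ψ1 i j < 1)
    (r0 r1 : Fin n → ℝ) (S : Finset (Fin n))
    (ΨS Ψswap : Matrix (Fin n) (Fin n) ℝ)
    (hΨS : ∀ i j, ΨS i j = if i ∈ S then Ψ1 i j else Ψ0 i j)
    (hΨswap : ∀ i j, Ψswap i j = if i ∈ S then Ψ0 i j else Ψ1 i j)
    (rAct rPas : Fin n → ℝ)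
    (hrAct : ∀ i, rAct i = if i ∈ S then r1 i else r0 i)
    (hrPas : ∀ i, rPas i = if i ∈ S then r0 i else r1 i)
    (B N H A : Matrix (Fin n) (Fin n) ℝ)
    (hB : B = (1 - ΨS)ᵀ) (hN : N = (1 - Ψswap)ᵀ)
    (hH : H = B⁻¹) (hA : A = H * N)
    (F : Fin n → ℝ) (hF : F = (1 - ΨS)⁻¹.mulVec rAct)
    (f : Fin n → ℝ)
    (hf : ∀ i, f i = (r1 i + Ψ1.mulVec F i) - (r0 i + Ψ0.mulVec F i)) :
    (fun i => if i ∈ S then f i else -f i) = rAct ᵥ* A - rPas := by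

  set M : Matrix (Fin n) (Fin n) ℝ := 1 - ΨS with hM
  -- row sums of ΨS are < 1 and entries nonneg
  have hSnn : ∀ i j, 0 ≤ ΨS i j := fun i j => by
    rw [hΨS]; split <;> [exact h1nn i j; exact h0nn i j]
  have hSrs : ∀ i, ∑ j, ΨS i j < 1 := fun i => by
    by_cases hi : i ∈ S
    · simpa [hΨS, hi] using h1rs i
    · simpa [hΨS, hi] using h0rs i
  -- M has nonzero determinant (strict diagonal dominance)
  have hdet : M.det ≠ 0 := by
    apply det_ne_zero_of_sum_row_lt_diag
    intro k
    have hkk : ΨS k k ≤ ∑ j, ΨS k j :=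
      Finset.single_le_sum (fun j _ => hSnn k j) (Finset.mem_univ k)
    have h1 : ΨS k k < 1 := lt_of_le_of_lt hkk (hSrs k)
    have hMkk : M k k = 1 - ΨS k k := by simp [hM, Matrix.one_apply]
    have hnorm : ∀ j ∈ Finset.univ.erase k, ‖M k j‖ = ΨS k j := by
      intro j hj
      have hjk : j ≠ k := (Finset.mem_erase.mp hj).1
      have : M k j = -ΨS k j := by simp [hM, Matrix.one_apply, hjk.symm]
      rw [this, norm_neg, Real.norm_of_nonneg (hSnn k j)]
    rw [Finset.sum_congr rfl hnorm, hMkk, Real.norm_of_nonneg (by linarith)]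
    have hsum : ∑ j ∈ Finset.univ.erase k, ΨS k j = (∑ j, ΨS k j) - ΨS k k :=
      Finset.sum_erase_eq_sub (Finset.mem_univ k)
    have := hSrs k
    linarith [hsum]
  have hu : IsUnit M.det := isUnit_iff_ne_zero.mpr hdet
  have hMF : M *ᵥ F = rAct := by
    rw [hF, Matrix.mulVec_mulVec, Matrix.mul_nonsing_inv _ hu, Matrix.one_mulVec]
  -- rAct ᵥ* A = (1 - Ψswap) *ᵥ F
  have hkey : rAct ᵥ* A = (1 - Ψswap) *ᵥ F := by
    rw [hA, hH, hB, hN, ← Matrix.vecMul_vecMul, ← Matrix.transpose_nonsing_inv,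
      Matrix.vecMul_transpose, Matrix.vecMul_transpose]
    rw [hF]
  funext i
  have hFi : F i = rAct i + (ΨS *ᵥ F) i := by
    have := congrFun hMF i
    rw [hM, Matrix.sub_mulVec, Matrix.one_mulVec] at this
    have : F i - (ΨS *ᵥ F) i = rAct i := by simpa using this
    linarith
  have hΨSrow : (ΨS *ᵥ F) i = if i ∈ S then (Ψ1 *ᵥ F) i else (Ψ0 *ᵥ F) i := by
    simp only [Matrix.mulVec, dotProduct]
    by_cases hi : i ∈ S <;> simp [hΨS, hi]
  have hΨswrow : (Ψswap *ᵥ F) i = if i ∈ S then (Ψ0 *ᵥ F) i else (Ψ1 *ᵥ F) i := by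
    simp only [Matrix.mulVec, dotProduct]
    by_cases hi : i ∈ S <;> simp [hΨswap, hi]
  have hrhs : (rAct ᵥ* A - rPas) i = F i - (Ψswap *ᵥ F) i - rPas i := by
    have := congrFun hkey i
    rw [Matrix.sub_mulVec, Matrix.one_mulVec] at this
    simp [this]
  rw [hrhs, hf i, hrPas i]
  by_cases hi : i ∈ S
  · have h1' : F i = r1 i + (Ψ1 *ᵥ F) i := by
      rw [hFi, hrAct i, hΨSrow]; simp [hi]
    rw [hΨswrow]; simp only [hi, if_true]; linarith
  · have h1' : F i = r0 i + (Ψ0 *ᵥ F) i := by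
      rw [hFi, hrAct i, hΨSrow]; simp [hi]
    rw [hΨswrow]; simp only [hi, if_false]; linarith
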